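/- arXiv:math/0412408 — 2 statements merged into one kernel-verified Lean document; each statement's English description precedes it below -/
import Mathlib

section
/- Assume that the Martin space ℳ is first-countable. Then for every w ∈ ℳᵐ there exists an almost-geodesic (i_k)_{k≥0} with respect to π such that K_{·i_k} converges to w in the product topology. -/
open Filter Topology

noncomputable section

namespace MaxPlus

variable {S : Type*}

/-- Weight of the path `p 0, p 1, ..., p n` for the kernel `A`. -/
def pathWeight (A : S → S → EReal) (p : ℕ → S) (n : ℕ) : EReal :=
  ∑ k ∈ Finset.range n, A (p k) (p (k + 1))

/-- The max-plus star kernel `A*`: supremum of weights of paths of length `≥ 0`. -/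
def star (A : S → S → EReal) (i j : S) : EReal :=
  ⨆ (n : ℕ) (p : ℕ → S) (_ : p 0 = i ∧ p n = j), pathWeight A p n

/-- The max-plus kernel `A⁺`: supremum of weights of paths of length `≥ 1`. -/
def plus (A : S → S → EReal) (i j : S) : EReal :=
  ⨆ (n : ℕ) (_ : 1 ≤ n) (p : ℕ → S) (_ : p 0 = i ∧ p n = j), pathWeight A p n

/-- `π` is a left super-harmonic row vector (with full support, being real valued). -/
def LeftSuperharmonic (A : S → S → EReal) (π : S → ℝ) : Prop :=
  ∀ j, (⨆ i, ((π i : EReal) + A i j)) ≤ (π j : EReal)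

/-- The Martin kernel `K_{ij} = A*_{ij} - π_j`. -/
def K (A : S → S → EReal) (π : S → ℝ) (i j : S) : EReal :=
  star A i j - (π j : EReal)

/-- `K♭_{ij} = A⁺_{ij} - π_j`. -/
def Kflat (A : S → S → EReal) (π : S → ℝ) (i j : S) : EReal :=
  plus A i j - (π j : EReal)

/-- The set `𝒦` of columns of the Martin kernel. -/
def kerCols (A : S → S → EReal) (π : S → ℝ) : Set (S → EReal) :=
  Set.range fun j => fun i => K A π i j

/-- The Martin space `ℳ`: closure of `𝒦` in the product topology. -/
def martin (A : S → S → EReal) (π : S → ℝ) : Set (S → EReal) :=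
  closure (kerCols A π)

/-- `μ_u(w)`: the limsup of `π_j + u_j` as `K_{·j} → w`. -/
def mu (A : S → S → EReal) (π : S → ℝ) (u : S → EReal) (w : S → EReal) : EReal :=
  ⨅ (W : Set (S → EReal)) (_ : W ∈ 𝓝 w),
    ⨆ (j : S) (_ : (fun i => K A π i j) ∈ W), ((π j : EReal) + u j)

/-- `w♭_i`: the liminf of `K♭_{ij}` as `K_{·j} → w`. -/
def flat (A : S → S → EReal) (π : S → ℝ) (w : S → EReal) (i : S) : EReal :=
  ⨆ (W : Set (S → EReal)) (_ : W ∈ 𝓝 w),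
    ⨅ (j : S) (_ : (fun i' => K A π i' j) ∈ W), Kflat A π i j

/-- The kernel `H(z,w) = μ_w(z)`. -/
def H (A : S → S → EReal) (π : S → ℝ) (z w : S → EReal) : EReal := mu A π w z

/-- The kernel `H♭(z,w) = μ_{w♭}(z)`. -/
def Hflat (A : S → S → EReal) (π : S → ℝ) (z w : S → EReal) : EReal :=
  mu A π (flat A π w) z

/-- The minimal Martin space `ℳᵐ = {w ∈ ℳ : H♭(w,w) = 0}`. -/
def martinMin (A : S → S → EReal) (π : S → ℝ) : Set (S → EReal) :=
  {w | w ∈ martin A π ∧ Hflat A π w w = 0}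

/-- The maximal circuit mean `ρ(A)`. -/
def maxCircuitMean (A : S → S → EReal) : EReal :=
  ⨆ (k : ℕ) (_ : 1 ≤ k) (p : ℕ → S) (_ : p k = p 0),
    (((k : ℝ)⁻¹ : ℝ) : EReal) * pathWeight A p k

/-- `α`-almost-geodesic with respect to the left super-harmonic vector `π`. -/
def IsAlmostGeodesic (A : S → S → EReal) (π : S → ℝ) (x : ℕ → S) : Prop :=
  ∃ α : ℝ, 0 ≤ α ∧ ∀ k : ℕ,
    (π (x k) : EReal) ≤ (α : EReal) + (π (x 0) : EReal) + pathWeight A x k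

/-- The set `𝒮` of `π`-integrable super-harmonic vectors. -/
def Sset (A : S → S → EReal) (π : S → ℝ) : Set (S → EReal) :=
  {u | (∀ i, u i ≠ ⊤) ∧ (∀ i, (⨆ j, A i j + u j) ≤ u i) ∧
    (⨆ j, ((π j : EReal) + u j)) < ⊤}

/-- The set `ℋ` of `π`-integrable harmonic vectors. -/
def Hset (A : S → S → EReal) (π : S → ℝ) : Set (S → EReal) :=
  {u | (∀ i, u i ≠ ⊤) ∧ (∀ i, (⨆ j, A i j + u j) = u i) ∧
    (⨆ j, ((π j : EReal) + u j)) < ⊤}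

/-- A vector is normalised if `sup_j (π_j + u_j) = 0`. -/
def Normalised (π : S → ℝ) (u : S → EReal) : Prop :=
  (⨆ j, ((π j : EReal) + u j)) = 0

/-- `ξ` is an extremal generator of `V`. -/
def ExtremalGen (V : Set (S → EReal)) (ξ : S → EReal) : Prop :=
  ξ ∈ V ∧ ξ ≠ (fun _ => (⊥ : EReal)) ∧
    ∀ u v, u ∈ V → v ∈ V → ξ = (fun i => u i ⊔ v i) → ξ = u ∨ ξ = v

end MaxPlus
namespace MaxPlus

section AuxiliaryLemmas
variable {S : Type*}

-- EReal helpers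

lemma sub_coe_eq (x : EReal) (a : ℝ) : x - (a : EReal) = x + ((-a : ℝ) : EReal) := by
  rw [sub_eq_add_neg, EReal.coe_neg]

lemma add_coe_coe (x : EReal) (a b : ℝ) :
    x + (a : EReal) + (b : EReal) = x + ((a + b : ℝ) : EReal) := by
  rw [add_assoc, ← EReal.coe_add]

lemma iSup_add_le {ι : Sort*} (f : ι → EReal) (c y : EReal) (h : ∀ x, f x + c ≤ y) :
    (⨆ x, f x) + c ≤ y := by
  induction c with
  | bot => simp [EReal.add_bot]
  | coe c =>
    have h2 : ∀ x, f x ≤ y - (c : EReal) := fun x => by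
      have := h x
      rw [EReal.le_sub_iff_add_le (Or.inl (EReal.coe_ne_bot c)) (Or.inl (EReal.coe_ne_top c))]
      exact this
    have h3 : (⨆ x, f x) ≤ y - (c : EReal) := iSup_le h2
    calc (⨆ x, f x) + (c : EReal) ≤ (y - (c : EReal)) + c := add_le_add_left h3 _
      _ = y := EReal.sub_add_cancel
  | top =>
    by_cases hall : ∀ x, f x = ⊥
    · have : (⨆ x, f x) = ⊥ := by simp [iSup_eq_bot.2 hall]
      simp [this, EReal.bot_add]
    · push_neg at hall
      obtain ⟨x, hx⟩ := hall
      have : f x + ⊤ = ⊤ := EReal.add_top_of_ne_bot hx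
      have := (this ▸ h x : (⊤ : EReal) ≤ y)
      exact le_trans le_top (top_le_iff.1 this ▸ le_rfl)

section
variable (A : S → S → EReal) (π : S → ℝ)

lemma pw_zero (p : ℕ → S) : pathWeight A p 0 = 0 := by simp [pathWeight]

lemma pw_succ (p : ℕ → S) (n : ℕ) :
    pathWeight A p (n + 1) = pathWeight A p n + A (p n) (p (n + 1)) :=
  Finset.sum_range_succ _ _

lemma pw_congr (p q : ℕ → S) (n : ℕ) (h : ∀ k ≤ n, p k = q k) :
    pathWeight A p n = pathWeight A q n := by
  unfold pathWeight
  apply Finset.sum_congr rfl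
  intro k hk
  rw [Finset.mem_range] at hk
  rw [h k (le_of_lt hk), h (k+1) hk]

lemma pw_split (p : ℕ → S) (a b : ℕ) :
    pathWeight A p (a + b) = pathWeight A p a + pathWeight A (fun r => p (a + r)) b := by
  induction b with
  | zero => simp [pw_zero]
  | succ b ih =>
    rw [← add_assoc, pw_succ, ih, pw_succ, add_assoc, ← Nat.add_assoc]

lemma pw_ne_top (hA : ∀ i j, A i j ≠ ⊤) (p : ℕ → S) (n : ℕ) : pathWeight A p n ≠ ⊤ := by
  induction n with
  | zero => simp [pw_zero]
  | succ n ih =>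
    rw [pw_succ]
    exact (EReal.add_lt_top ih (hA _ _)).ne

lemma superharmonic_step (hπ : LeftSuperharmonic A π) (i j : S) :
    (π i : EReal) + A i j ≤ (π j : EReal) :=
  le_trans (le_iSup (fun i => (π i : EReal) + A i j) i) (hπ j)

lemma pw_pi_le (hπ : LeftSuperharmonic A π) (p : ℕ → S) (n : ℕ) :
    (π (p 0) : EReal) + pathWeight A p n ≤ (π (p n) : EReal) := by
  induction n with
  | zero => simp [pw_zero]
  | succ n ih =>
    rw [pw_succ, ← add_assoc]
    calc (π (p 0) : EReal) + pathWeight A p n + A (p n) (p (n+1))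
        ≤ (π (p n) : EReal) + A (p n) (p (n+1)) := add_le_add_left ih _
      _ ≤ _ := superharmonic_step A π hπ _ _

lemma le_star_of_path (p : ℕ → S) (n : ℕ) {i j : S} (h0 : p 0 = i) (hn : p n = j) :
    pathWeight A p n ≤ star A i j := by
  refine le_trans ?_ (le_iSup _ n)
  refine le_trans ?_ (le_iSup _ p)
  exact le_iSup (fun _ : p 0 = i ∧ p n = j => pathWeight A p n) ⟨h0, hn⟩

lemma star_le_coe (hπ : LeftSuperharmonic A π) (i j : S) :
    star A i j ≤ ((π j - π i : ℝ) : EReal) := by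
  refine iSup_le fun n => iSup_le fun p => iSup_le fun ⟨h0, hn⟩ => ?_
  have h := pw_pi_le A π hπ p n
  rw [h0, hn] at h
  have : pathWeight A p n = ((-π i : ℝ) : EReal) + ((π i : EReal) + pathWeight A p n) := by
    rw [← add_assoc, ← EReal.coe_add]
    norm_num
  rw [this]
  calc ((-π i : ℝ) : EReal) + ((π i : EReal) + pathWeight A p n)
      ≤ ((-π i : ℝ) : EReal) + (π j : EReal) := add_le_add_right h _
    _ = ((π j - π i : ℝ) : EReal) := by rw [← EReal.coe_add]; norm_cast; ring

lemma star_ne_top (hπ : LeftSuperharmonic A π) (i j : S) : star A i j ≠ ⊤ :=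
  fun h => by simpa [h] using (star_le_coe A π hπ i j).trans_lt (EReal.coe_lt_top _)

lemma star_concat (q : ℕ → S) (m : ℕ) {i a b : S} (h0 : q 0 = a) (hm : q m = b) :
    star A i a + pathWeight A q m ≤ star A i b := by
  refine iSup_add_le _ _ _ fun n => iSup_add_le _ _ _ fun p => iSup_add_le _ _ _ fun hp => ?_
  -- concatenated path
  set r : ℕ → S := fun k => if k < n then p k else q (k - n) with hr
  have hagree : ∀ k ≤ n, r k = p k := by
    intro k hk
    rcases lt_or_eq_of_le hk with h | h
    · simp [hr, h]
    · subst h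
      simp [hr, hp.2, h0]
  have hshift : ∀ k, r (n + k) = q k := by
    intro k
    simp [hr, Nat.add_sub_cancel_left]
  have h1 : pathWeight A r n = pathWeight A p n := pw_congr A r p n hagree
  have h2 : pathWeight A (fun s => r (n + s)) m = pathWeight A q m :=
    pw_congr A _ q m (fun k _ => hshift k)
  have h3 : pathWeight A r (n + m) = pathWeight A p n + pathWeight A q m := by
    rw [pw_split, h1, h2]
  have hr0 : r 0 = i := by rw [hagree 0 (Nat.zero_le n), hp.1]
  have hrm : r (n + m) = b := by rw [hshift m, hm]
  rw [← h3]
  exact le_star_of_path A r (n + m) hr0 hrm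

end



-- more EReal helpers
lemma coe_lt_add_coe_iff (u : EReal) (c d : ℝ) :
    ((c : ℝ) : EReal) < u + ((d : ℝ) : EReal) ↔ (((c - d : ℝ)) : EReal) < u := by
  induction u with
  | bot => simp [EReal.bot_add]
  | coe u =>
    rw [← EReal.coe_add, EReal.coe_lt_coe_iff, EReal.coe_lt_coe_iff]
    exact sub_lt_iff_lt_add.symm
  | top =>
    simp only [EReal.top_add_coe]
    constructor <;> intro _
    · exact lt_of_le_of_lt (by exact_mod_cast (by linarith : c - d ≤ c - d)) (EReal.coe_lt_top _)
    · exact EReal.coe_lt_top _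

lemma lt_sub_coe_iff (u : EReal) (c d : ℝ) :
    ((c : ℝ) : EReal) < u - ((d : ℝ) : EReal) ↔ (((c + d : ℝ)) : EReal) < u := by
  rw [sub_coe_eq, coe_lt_add_coe_iff]
  norm_num

section
variable (A : S → S → EReal) (π : S → ℝ)

lemma K_le_coe (hπ : LeftSuperharmonic A π) (i j : S) :
    K A π i j ≤ ((-π i : ℝ) : EReal) := by
  unfold K
  rw [sub_coe_eq]
  calc star A i j + ((-π j : ℝ) : EReal) ≤ ((π j - π i : ℝ) : EReal) + ((-π j : ℝ) : EReal) :=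
        add_le_add_left (star_le_coe A π hπ i j) _
    _ = _ := by rw [← EReal.coe_add]; norm_cast; ring

lemma exists_path_of_lt_plus {i j : S} {c : EReal} (h : c < plus A i j) :
    ∃ n, 1 ≤ n ∧ ∃ p : ℕ → S, p 0 = i ∧ p n = j ∧ c < pathWeight A p n := by
  unfold plus at h
  rw [lt_iSup_iff] at h
  obtain ⟨n, h⟩ := h
  rw [lt_iSup_iff] at h
  obtain ⟨hn, h⟩ := h
  rw [lt_iSup_iff] at h
  obtain ⟨p, h⟩ := h
  rw [lt_iSup_iff] at h
  obtain ⟨⟨h0, hend⟩, h⟩ := h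
  exact ⟨n, hn, p, h0, hend, h⟩

lemma mem_martin_of_col (j : S) : (fun i => K A π i j) ∈ martin A π :=
  subset_closure ⟨j, rfl⟩

lemma martin_le_coe (hπ : LeftSuperharmonic A π) {w : S → EReal} (hw : w ∈ martin A π) (i : S) :
    w i ≤ ((-π i : ℝ) : EReal) := by
  have hcl : IsClosed {f : S → EReal | f i ≤ ((-π i : ℝ) : EReal)} :=
    isClosed_le (continuous_apply i) continuous_const
  have hsub : kerCols A π ⊆ {f : S → EReal | f i ≤ ((-π i : ℝ) : EReal)} := by
    rintro f ⟨j, rfl⟩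
    exact K_le_coe A π hπ i j
  exact closure_minimal hsub hcl hw

/-- The key step extraction from `Hflat w w = 0`. -/
lemma step_extraction (hπ : LeftSuperharmonic A π) {w : S → EReal}
    (hw : Hflat A π w w = 0) {W : Set (S → EReal)} (hW : W ∈ 𝓝 w) {ε : ℝ} (hε : 0 < ε) :
    ∃ j : S, (fun i => K A π i j) ∈ W ∧ ∃ N ∈ 𝓝 w, ∀ j' : S,
      (fun i => K A π i j') ∈ N → ((π j' - π j - ε : ℝ) : EReal) < plus A (j) j' := by
  have h1 : (0 : EReal) ≤ ⨆ (j : S) (_ : (fun i => K A π i j) ∈ W),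
      ((π j : EReal) + flat A π w j) := by
    rw [← hw]
    exact iInf₂_le W hW
  have h2 : (((-ε : ℝ)) : EReal) < ⨆ (j : S) (_ : (fun i => K A π i j) ∈ W),
      ((π j : EReal) + flat A π w j) := by
    refine lt_of_lt_of_le ?_ h1
    exact_mod_cast (neg_lt_zero.2 hε)
  rw [lt_iSup_iff] at h2
  obtain ⟨j, h2⟩ := h2
  rw [lt_iSup_iff] at h2
  obtain ⟨hjW, h2⟩ := h2
  -- ((-ε)) < π j + flat w j  ⟹  ((-ε - π j)) < flat w j
  rw [add_comm ((π j : ℝ) : EReal) _, coe_lt_add_coe_iff (flat A π w j) (-ε) (π j)] at h2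
  -- now unfold flat: sup over neighborhoods
  unfold flat at h2
  rw [lt_iSup_iff] at h2
  obtain ⟨N, h2⟩ := h2
  rw [lt_iSup_iff] at h2
  obtain ⟨hN, h2⟩ := h2
  refine ⟨j, hjW, N, hN, fun j' hj' => ?_⟩
  have h3 : ((-ε - π j : ℝ) : EReal) < Kflat A π j j' :=
    lt_of_lt_of_le h2 (iInf₂_le j' hj')
  unfold Kflat at h3
  rw [sub_coe_eq, coe_lt_add_coe_iff] at h3
  rw [show (π j' - π j - ε : ℝ) = (-ε - π j - -π j' : ℝ) by ring]
  exact h3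

/-- First-countability extraction: a sequence of neighbourhoods forcing convergence. -/
lemma exists_nbhd_seq [FirstCountableTopology ↥(martin A π)]
    {w : S → EReal} (hw : w ∈ martin A π) :
    ∃ U : ℕ → Set (S → EReal), (∀ n, U n ∈ 𝓝 w) ∧
      ∀ z : ℕ → (S → EReal), (∀ k, z k ∈ martin A π) → (∀ k, z k ∈ U k) →
        Tendsto z atTop (𝓝 w) := by
  obtain ⟨s, hs⟩ := (𝓝 (⟨w, hw⟩ : ↥(martin A π))).exists_antitone_basis
  have hcomap : 𝓝 (⟨w, hw⟩ : ↥(martin A π)) = Filter.comap Subtype.val (𝓝 w) :=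
    nhds_induced _ _
  have hU : ∀ n : ℕ, ∃ U ∈ 𝓝 w, Subtype.val ⁻¹' U ⊆ s n := by
    intro n
    have : s n ∈ Filter.comap (Subtype.val : ↥(martin A π) → S → EReal) (𝓝 w) := by
      rw [← hcomap]; exact hs.toHasBasis.mem_of_mem trivial
    exact this
  choose U hUmem hUsub using hU
  refine ⟨fun n => ⋂ m ∈ Finset.range (n + 1), U m, fun n =>
    (Filter.biInter_finset_mem _).2 fun m _ => hUmem m, ?_⟩
  intro z hzmem hzU
  have hz' : Tendsto (fun k => (⟨z k, hzmem k⟩ : ↥(martin A π))) atTop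
      (𝓝 (⟨w, hw⟩ : ↥(martin A π))) := by
    rw [hs.toHasBasis.tendsto_right_iff]
    intro n _
    filter_upwards [Filter.eventually_ge_atTop n] with k hk
    apply hUsub n
    have := hzU k
    simp only [Set.mem_iInter] at this
    exact this n (Finset.mem_range.2 (Nat.lt_succ_of_le hk))
  have := (continuous_subtype_val.tendsto _).comp hz'
  exact this

end



/-- Simple recursor for building sequences. -/
def recSeq {β : Type*} (init : β) (step : ℕ → β → β) : ℕ → β
  | 0 => init
  | (k+1) => step k (recSeq init step k)

@[simp] lemma recSeq_zero {β : Type*} (init : β) (step : ℕ → β → β) :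
    recSeq init step 0 = init := rfl

@[simp] lemma recSeq_succ {β : Type*} (init : β) (step : ℕ → β → β) (k : ℕ) :
    recSeq init step (k+1) = step k (recSeq init step k) := rfl

/-- Cumulative segment lengths. -/
def tseg (n : ℕ → ℕ) (k : ℕ) : ℕ := ∑ l ∈ Finset.range k, n l

def kappa (n : ℕ → ℕ) (m : ℕ) : ℕ := Nat.findGreatest (fun k => tseg n k ≤ m) m

def flatten (n : ℕ → ℕ) (p : ℕ → ℕ → S) (m : ℕ) : S :=
  p (kappa n m) (m - tseg n (kappa n m))

section
variable {n : ℕ → ℕ} (hn : ∀ k, 1 ≤ n k)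

lemma tseg_zero : tseg n 0 = 0 := rfl

lemma tseg_succ (k : ℕ) : tseg n (k+1) = tseg n k + n k := Finset.sum_range_succ _ _

include hn

lemma le_tseg (k : ℕ) : k ≤ tseg n k := by
  induction k with
  | zero => simp [tseg_zero]
  | succ k ih => rw [tseg_succ]; have := hn k; omega

lemma tseg_mono {k l : ℕ} (h : k ≤ l) : tseg n k ≤ tseg n l := by
  unfold tseg
  exact Finset.sum_le_sum_of_subset (Finset.range_mono h)

lemma tseg_strict (k : ℕ) : tseg n k < tseg n (k+1) := by
  rw [tseg_succ]; have := hn k; omega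

lemma kappa_spec (m : ℕ) : tseg n (kappa n m) ≤ m ∧ m < tseg n (kappa n m + 1) := by
  constructor
  · exact Nat.findGreatest_spec (P := fun k => tseg n k ≤ m) (Nat.zero_le m)
      (show tseg n 0 ≤ m from Nat.zero_le m)
  · by_contra h
    push_neg at h
    have hle : kappa n m + 1 ≤ m := le_trans (le_tseg hn _) h
    exact Nat.findGreatest_is_greatest (Nat.lt_succ_self _) hle h

lemma kappa_eq {k m : ℕ} (h1 : tseg n k ≤ m) (h2 : m < tseg n (k+1)) : kappa n m = k := by
  have hge : k ≤ kappa n m := Nat.le_findGreatest (le_trans (le_tseg hn k) h1) h1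
  have : kappa n m < k + 1 := by
    by_contra h
    push_neg at h
    have := tseg_mono (n := n) hn h
    have := (kappa_spec hn m).1
    omega
  omega

variable {p : ℕ → ℕ → S} {j : ℕ → S}
  (h0 : ∀ k, p k 0 = j k) (hend : ∀ k, p k (n k) = j (k+1))

include h0 hend in
lemma flatten_eq {k r : ℕ} (hr : r ≤ n k) : flatten n p (tseg n k + r) = p k r := by
  rcases lt_or_eq_of_le hr with h | h
  · have hk : kappa n (tseg n k + r) = k :=
      kappa_eq hn (Nat.le_add_right _ _) (by rw [tseg_succ]; omega)
    unfold flatten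
    rw [hk, Nat.add_sub_cancel_left]
  · subst h
    have hm : tseg n k + n k = tseg n (k+1) := (tseg_succ k).symm
    have hk : kappa n (tseg n k + n k) = k + 1 := by
      apply kappa_eq hn (le_of_eq hm.symm)
      rw [hm, tseg_succ (k+1)]
      have := hn (k+1); omega
    unfold flatten
    rw [hk, hm, Nat.sub_self, h0, ← hend]

include h0 hend in
lemma flatten_zero : flatten n p 0 = j 0 := by
  have h00 : flatten n p (tseg n 0 + 0) = p 0 0 := flatten_eq hn h0 hend (Nat.zero_le (n 0))
  rw [show tseg n 0 + 0 = 0 from rfl] at h00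
  rw [h00, h0]

lemma kappa_tendsto : Tendsto (kappa n) atTop atTop := by
  rw [tendsto_atTop_atTop]
  intro K
  refine ⟨tseg n K, fun m hm => ?_⟩
  exact Nat.le_findGreatest (le_trans (le_tseg hn K) hm) hm

lemma exists_decomp (m : ℕ) : ∃ r, r < n (kappa n m) ∧ m = tseg n (kappa n m) + r := by
  obtain ⟨h1, h2⟩ := kappa_spec hn m
  refine ⟨m - tseg n (kappa n m), ?_, by omega⟩
  rw [tseg_succ] at h2
  omega

-- path weight of flattened sequence
variable (A : S → S → EReal)

include h0 hend in
lemma pw_flatten_piece {k r : ℕ} (hr : r ≤ n k) :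
    pathWeight A (flatten n p) (tseg n k + r) =
      pathWeight A (flatten n p) (tseg n k) + pathWeight A (p k) r := by
  rw [pw_split]
  congr 1
  apply pw_congr
  intro s hs
  exact flatten_eq hn h0 hend (le_trans hs hr)

include h0 hend in
lemma pw_flatten_tseg_succ (k : ℕ) :
    pathWeight A (flatten n p) (tseg n (k+1)) =
      pathWeight A (flatten n p) (tseg n k) + pathWeight A (p k) (n k) := by
  rw [tseg_succ]
  exact pw_flatten_piece hn h0 hend A le_rfl

end

end AuxiliaryLemmas

/-- if the Martin space `ℳ` is first-countable, then every `w ∈ ℳᵐ` is the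
limit of (the Martin kernel columns along) an almost-geodesic with respect to `π`. -/
theorem exists_almostGeodesic_of_mem_martinMin {S : Type*} (A : S → S → EReal)
    (hA : ∀ i j, A i j ≠ ⊤) (π : S → ℝ) (hπ : LeftSuperharmonic A π)
    [FirstCountableTopology ↥(martin A π)]
    (w : S → EReal) (hw : w ∈ martinMin A π) :
    ∃ x : ℕ → S, IsAlmostGeodesic A π x ∧
      Tendsto (fun k => fun i => K A π i (x k)) atTop (𝓝 w) := by
  obtain ⟨hwM, hwH⟩ := hw
  obtain ⟨U, hUmem, hUconv⟩ := exists_nbhd_seq A π hwM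
  set ε : ℕ → ℝ := fun k => (1/2)^k with hεdef
  have hεpos : ∀ k, 0 < ε k := fun k => by simp only [hεdef]; positivity
  -- step extraction, robust version
  have safe : ∀ (W : Set (S → EReal)) (k : ℕ), ∃ jN : S × Set (S → EReal),
      (W ∈ 𝓝 w → (fun i => K A π i jN.1) ∈ W) ∧ jN.2 ∈ 𝓝 w ∧
      ∀ j', (fun i => K A π i j') ∈ jN.2 →
        ((π j' - π jN.1 - ε k : ℝ) : EReal) < plus A jN.1 j' := by
    intro W k
    by_cases hW : W ∈ 𝓝 w
    · obtain ⟨j, hj1, N, hN, hprop⟩ := step_extraction A π hπ hwH hW (hεpos k)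
      exact ⟨(j, N), fun _ => hj1, hN, hprop⟩
    · obtain ⟨j, _, N, hN, hprop⟩ :=
        step_extraction A π hπ hwH (Filter.univ_mem (f := 𝓝 w)) (hεpos k)
      exact ⟨(j, N), fun h => absurd h hW, hN, hprop⟩
  choose F hF1 hF2 hF3 using safe
  obtain ⟨g, hg0, hgsucc⟩ : ∃ g : ℕ → S × Set (S → EReal), g 0 = F (U 0) 0 ∧
      ∀ k, g (k+1) = F (U (k+1) ∩ (g k).2) (k+1) :=
    ⟨recSeq (F (U 0) 0) (fun k prev => F (U (k+1) ∩ prev.2) (k+1)), rfl, fun k => rfl⟩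
  set j : ℕ → S := fun k => (g k).1 with hjdef
  have hNmem : ∀ k, (g k).2 ∈ 𝓝 w := by
    intro k
    cases k with
    | zero => rw [hg0]; exact hF2 _ _
    | succ k => rw [hgsucc]; exact hF2 _ _
  have hjU : ∀ k, (fun i => K A π i (j k)) ∈ U k := by
    intro k
    cases k with
    | zero =>
      have := hF1 (U 0) 0 (hUmem 0)
      rw [hjdef]; simp only []; rw [hg0]; exact this
    | succ k =>
      have := hF1 (U (k+1) ∩ (g k).2) (k+1) (Filter.inter_mem (hUmem (k+1)) (hNmem k))
      rw [hjdef]; simp only []; rw [hgsucc]; exact this.1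
  have hcross : ∀ k, (fun i => K A π i (j (k+1))) ∈ (g k).2 := by
    intro k
    have := hF1 (U (k+1) ∩ (g k).2) (k+1) (Filter.inter_mem (hUmem (k+1)) (hNmem k))
    rw [hjdef]; simp only []; rw [hgsucc]; exact this.2
  have hflatp : ∀ k j', (fun i => K A π i j') ∈ (g k).2 →
      ((π j' - π (j k) - ε k : ℝ) : EReal) < plus A (j k) j' := by
    intro k
    cases k with
    | zero => rw [hjdef]; simp only []; rw [hg0]; exact hF3 _ _
    | succ k => rw [hjdef]; simp only []; rw [hgsucc]; exact hF3 _ _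
  have hplus : ∀ k, ((π (j (k+1)) - π (j k) - ε k : ℝ) : EReal) < plus A (j k) (j (k+1)) :=
    fun k => hflatp k (j (k+1)) (hcross k)
  have hjconv : Tendsto (fun k => fun i => K A π i (j k)) atTop (𝓝 w) :=
    hUconv _ (fun k => mem_martin_of_col A π (j k)) hjU
  -- choose paths
  have hpath : ∀ k, ∃ nk, 1 ≤ nk ∧ ∃ pk : ℕ → S, pk 0 = j k ∧ pk nk = j (k+1) ∧
      ((π (j (k+1)) - π (j k) - ε k : ℝ) : EReal) < pathWeight A pk nk :=
    fun k => exists_path_of_lt_plus A (hplus k)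
  choose n hn p hp0 hpend hpw using hpath
  -- real total weights
  have hWne_top : ∀ k, pathWeight A (p k) (n k) ≠ ⊤ := fun k => pw_ne_top A hA _ _
  have hWne_bot : ∀ k, pathWeight A (p k) (n k) ≠ ⊥ := by
    intro k h
    have := hpw k
    rw [h] at this
    exact absurd this (by simp)
  set Wr : ℕ → ℝ := fun k => (pathWeight A (p k) (n k)).toReal with hWrdef
  have hWr : ∀ k, pathWeight A (p k) (n k) = ((Wr k : ℝ) : EReal) :=
    fun k => (EReal.coe_toReal (hWne_top k) (hWne_bot k)).symm
  have hWr_lt : ∀ k, π (j (k+1)) - π (j k) - ε k < Wr k := by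
    intro k
    have := hpw k
    rw [hWr k] at this
    exact_mod_cast this
  have hWr_le : ∀ k, π (j k) + Wr k ≤ π (j (k+1)) := by
    intro k
    have h := pw_pi_le A π hπ (p k) (n k)
    rw [hp0 k, hpend k, hWr k, ← EReal.coe_add] at h
    exact_mod_cast h
  -- per-segment real decomposition
  have hseg : ∀ k r, r ≤ n k → ∃ w1r w2r : ℝ,
      pathWeight A (p k) r = ((w1r : ℝ) : EReal) ∧
      pathWeight A (fun s => p k (r + s)) (n k - r) = ((w2r : ℝ) : EReal) ∧
      w1r + w2r = Wr k ∧ π (j k) + w1r ≤ π (p k r) ∧ π (p k r) + w2r ≤ π (j (k+1)) := by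
    intro k r hr
    have hnk : r + (n k - r) = n k := by omega
    have hsplit : pathWeight A (p k) (n k) =
        pathWeight A (p k) r + pathWeight A (fun s => p k (r + s)) (n k - r) := by
      conv_lhs => rw [← hnk]
      exact pw_split A (p k) r (n k - r)
    have h1t : pathWeight A (p k) r ≠ ⊤ := pw_ne_top A hA _ _
    have h2t : pathWeight A (fun s => p k (r + s)) (n k - r) ≠ ⊤ := pw_ne_top A hA _ _
    have h1b : pathWeight A (p k) r ≠ ⊥ := by
      intro h
      exact hWne_bot k (by rw [hsplit, h, EReal.bot_add])
    have h2b : pathWeight A (fun s => p k (r + s)) (n k - r) ≠ ⊥ := by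
      intro h
      exact hWne_bot k (by rw [hsplit, h, EReal.add_bot])
    refine ⟨(pathWeight A (p k) r).toReal, (pathWeight A (fun s => p k (r + s)) (n k - r)).toReal,
      (EReal.coe_toReal h1t h1b).symm, (EReal.coe_toReal h2t h2b).symm, ?_, ?_, ?_⟩
    · have : (((pathWeight A (p k) r).toReal + (pathWeight A (fun s => p k (r + s)) (n k - r)).toReal : ℝ) : EReal) = ((Wr k : ℝ) : EReal) := by
        rw [EReal.coe_add, EReal.coe_toReal h1t h1b, EReal.coe_toReal h2t h2b, ← hsplit, hWr k]
      exact_mod_cast this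
    · have h := pw_pi_le A π hπ (p k) r
      rw [hp0 k, ← EReal.coe_toReal h1t h1b, ← EReal.coe_add] at h
      exact_mod_cast h
    · have h := pw_pi_le A π hπ (fun s => p k (r + s)) (n k - r)
      simp only [Nat.add_zero] at h
      rw [hnk, hpend k, ← EReal.coe_toReal h2t h2b, ← EReal.coe_add] at h
      exact_mod_cast h
  -- cumulative real sums
  have hTk : ∀ k, pathWeight A (flatten n p) (tseg n k) =
      ((∑ l ∈ Finset.range k, Wr l : ℝ) : EReal) := by
    intro k
    induction k with
    | zero =>
      simp only [tseg_zero, Finset.range_zero, Finset.sum_empty, pw_zero]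
      exact EReal.coe_zero.symm ▸ rfl
    | succ k ih =>
      rw [pw_flatten_tseg_succ hn hp0 hpend A k, ih, hWr k, Finset.sum_range_succ,
        EReal.coe_add]
  have hgeom : ∀ k, (∑ l ∈ Finset.range k, ε l) + 2 * ε k = 2 := by
    intro k
    induction k with
    | zero => simp [hεdef]
    | succ k ih =>
      rw [Finset.sum_range_succ]
      simp only [hεdef] at ih ⊢
      rw [pow_succ]
      linarith
  have hbase : ∀ k, π (j k) ≤ (∑ l ∈ Finset.range k, ε l) + π (j 0) + ∑ l ∈ Finset.range k, Wr l := by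
    intro k
    induction k with
    | zero => simp
    | succ k ih =>
      rw [Finset.sum_range_succ, Finset.sum_range_succ]
      have := hWr_lt k
      linarith
  have hx0 : flatten n p 0 = j 0 := flatten_zero hn hp0 hpend
  -- the main per-position bounds
  have hmain : ∀ m,
      ((π (flatten n p m) : EReal) ≤ ((2 : ℝ) : EReal) + (π (flatten n p 0) : EReal) +
        pathWeight A (flatten n p) m) ∧
      (∀ i, K A π i (j (kappa n m)) + ((-(ε (kappa n m)) : ℝ) : EReal) ≤
          K A π i (flatten n p m) ∧
        K A π i (flatten n p m) ≤ K A π i (j (kappa n m + 1)) + ((ε (kappa n m) : ℝ) : EReal)) := by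
    intro m
    obtain ⟨r, hrlt, hm⟩ := exists_decomp hn m
    obtain ⟨w1r, w2r, hw1, hw2, hsum, hπ1, hπ2⟩ := hseg (kappa n m) r (le_of_lt hrlt)
    have hxm : flatten n p m = p (kappa n m) r := by
      conv_lhs => rw [hm]
      exact flatten_eq hn hp0 hpend (le_of_lt hrlt)
    have hpwm : pathWeight A (flatten n p) m =
        (((∑ l ∈ Finset.range (kappa n m), Wr l) + w1r : ℝ) : EReal) := by
      conv_lhs => rw [hm]
      rw [pw_flatten_piece hn hp0 hpend A (le_of_lt hrlt), hTk (kappa n m), hw1, ← EReal.coe_add]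
    have hπ3 : π (j (kappa n m + 1)) ≤ π (j (kappa n m)) + w1r + w2r + ε (kappa n m) := by
      have := hWr_lt (kappa n m)
      rw [← hsum] at this
      linarith
    refine ⟨?_, fun i => ⟨?_, ?_⟩⟩
    · rw [hxm, hpwm, hx0]
      have hreal : π (p (kappa n m) r) ≤ 2 + π (j 0) + ((∑ l ∈ Finset.range (kappa n m), Wr l) + w1r) := by
        have h1 := hbase (kappa n m)
        have h2 := hgeom (kappa n m)
        have h3 := hεpos (kappa n m)
        linarith
      calc (π (p (kappa n m) r) : EReal)
          ≤ ((2 + π (j 0) + ((∑ l ∈ Finset.range (kappa n m), Wr l) + w1r) : ℝ) : EReal) :=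
            EReal.coe_le_coe_iff.2 hreal
        _ = _ := by rw [EReal.coe_add, EReal.coe_add]
    · -- lower bound for K
      rw [hxm]
      have hstar1 : star A i (j (kappa n m)) + ((w1r : ℝ) : EReal) ≤
          star A i (p (kappa n m) r) := by
        rw [← hw1]
        exact star_concat A (p (kappa n m)) r (hp0 (kappa n m)) rfl
      unfold K
      rw [sub_coe_eq, sub_coe_eq]
      calc star A i (j (kappa n m)) + ((-π (j (kappa n m)) : ℝ) : EReal) +
            ((-(ε (kappa n m)) : ℝ) : EReal)
          = star A i (j (kappa n m)) + ((w1r : ℝ) : EReal) +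
            ((-π (j (kappa n m)) + -(ε (kappa n m)) - w1r : ℝ) : EReal) := by
            rw [add_coe_coe, add_coe_coe]
            congr 1
            exact EReal.coe_eq_coe_iff.2 (by ring)
        _ ≤ star A i (p (kappa n m) r) +
            ((-π (j (kappa n m)) + -(ε (kappa n m)) - w1r : ℝ) : EReal) :=
            add_le_add_left hstar1 _
        _ ≤ star A i (p (kappa n m) r) + ((-π (p (kappa n m) r) : ℝ) : EReal) := by
            refine add_le_add_right (EReal.coe_le_coe_iff.2 ?_) _
            linarith
    · -- upper bound for K
      rw [hxm]
      have hstar2 : star A i (p (kappa n m) r) + ((w2r : ℝ) : EReal) ≤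
          star A i (j (kappa n m + 1)) := by
        rw [← hw2]
        refine star_concat A (fun s => p (kappa n m) (r + s)) (n (kappa n m) - r) (by simp) ?_
        show p (kappa n m) (r + (n (kappa n m) - r)) = j (kappa n m + 1)
        rw [show r + (n (kappa n m) - r) = n (kappa n m) by omega, hpend (kappa n m)]
      unfold K
      rw [sub_coe_eq, sub_coe_eq]
      calc star A i (p (kappa n m) r) + ((-π (p (kappa n m) r) : ℝ) : EReal)
          ≤ star A i (p (kappa n m) r) +
            ((w2r - π (j (kappa n m + 1)) + ε (kappa n m) : ℝ) : EReal) := by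
            refine add_le_add_right (EReal.coe_le_coe_iff.2 ?_) _
            linarith
        _ = star A i (p (kappa n m) r) + ((w2r : ℝ) : EReal) +
            ((-π (j (kappa n m + 1)) + ε (kappa n m) : ℝ) : EReal) := by
            rw [add_coe_coe]
            congr 1
            exact EReal.coe_eq_coe_iff.2 (by ring)
        _ ≤ star A i (j (kappa n m + 1)) + ((-π (j (kappa n m + 1)) + ε (kappa n m) : ℝ) : EReal) :=
            add_le_add_left hstar2 _
        _ = star A i (j (kappa n m + 1)) + ((-π (j (kappa n m + 1)) : ℝ) : EReal) +
            ((ε (kappa n m) : ℝ) : EReal) := by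
            rw [add_coe_coe]
  -- assemble
  refine ⟨flatten n p, ⟨2, by norm_num, ?_⟩, ?_⟩
  · intro m
    exact (hmain m).1
  · rw [tendsto_pi_nhds]
    intro i
    have hwi_top : w i ≠ ⊤ :=
      ((martin_le_coe A π hπ hwM i).trans_lt (EReal.coe_lt_top _)).ne
    have hKi : Tendsto (fun k => K A π i (j k)) atTop (𝓝 (w i)) := tendsto_pi_nhds.1 hjconv i
    have hε0 : Tendsto (fun k : ℕ => ((-(ε k) : ℝ) : EReal)) atTop (𝓝 (0 : EReal)) := by
      rw [show (0 : EReal) = ((0 : ℝ) : EReal) from rfl]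
      rw [EReal.tendsto_coe]
      simp only [hεdef]
      simpa using (tendsto_pow_atTop_nhds_zero_of_lt_one (by norm_num : (0:ℝ) ≤ 1/2)
        (by norm_num : (1/2:ℝ) < 1)).neg
    have hε0' : Tendsto (fun k : ℕ => ((ε k : ℝ) : EReal)) atTop (𝓝 (0 : EReal)) := by
      rw [show (0 : EReal) = ((0 : ℝ) : EReal) from rfl]
      rw [EReal.tendsto_coe]
      simp only [hεdef]
      exact tendsto_pow_atTop_nhds_zero_of_lt_one (by norm_num) (by norm_num)
    have hcont : ContinuousAt (fun q : EReal × EReal => q.1 + q.2) (w i, 0) :=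
      EReal.continuousAt_add (Or.inr (by simp)) (Or.inr (by simp))
    have hlow : Tendsto (fun k => K A π i (j k) + ((-(ε k) : ℝ) : EReal)) atTop (𝓝 (w i)) := by
      have := hcont.tendsto.comp (hKi.prodMk_nhds hε0)
      simpa [Function.comp_def] using this
    have hup : Tendsto (fun k => K A π i (j (k + 1)) + ((ε k : ℝ) : EReal)) atTop (𝓝 (w i)) := by
      have hKi' : Tendsto (fun k => K A π i (j (k + 1))) atTop (𝓝 (w i)) :=
        hKi.comp (tendsto_add_atTop_nat 1)
      have := hcont.tendsto.comp (hKi'.prodMk_nhds hε0')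
      simpa [Function.comp_def] using this
    have hκ : Tendsto (kappa n) atTop atTop := kappa_tendsto hn
    refine tendsto_of_tendsto_of_tendsto_of_le_of_le (hlow.comp hκ) (hup.comp hκ)
      (fun m => ?_) (fun m => ?_)
    · exact ((hmain m).2 i).1
    · exact ((hmain m).2 i).2


end MaxPlus
end
end

section
/- Let (S, d) be a proper metric space. Then the minimal Martin space ℳᵐ is the disjoint union of 𝒦 and the set of Busemann points of (S, d): ℳᵐ = 𝒦 ∪ {Busemann points}, and no Busemann point belongs to 𝒦. -/
open Filter Topology

noncomputable section

namespace MaxPlus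

variable {S : Type*} [MetricSpace S]

/-- The max-plus kernel associated to a metric: `A_{ij} = -d(i,j)`. -/
def metKer (S : Type*) [MetricSpace S] : S → S → EReal :=
  fun i j => ((-dist i j : ℝ) : EReal)

/-- The left super-harmonic vector `π = -d(b, ·)` given by a basepoint `b`. -/
def metPi (b : S) : S → ℝ := fun j => -dist b j

/-- A Rieffel almost-geodesic: `γ : T → S` with `T ⊆ [0,∞)` unbounded, `0 ∈ T`, such that
for all `ε > 0`, for all sufficiently large `s ∈ T` and all `t ∈ T` with `t ≥ s`,
`|d(γ(t),γ(s)) + d(γ(s),γ(0)) − t| < ε`. -/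
def IsRieffelAlmostGeodesic (T : Set ℝ) (γ : ℝ → S) : Prop :=
  (0 : ℝ) ∈ T ∧ (∀ t ∈ T, 0 ≤ t) ∧ ¬ BddAbove T ∧
    ∀ ε : ℝ, 0 < ε → ∃ M : ℝ, ∀ s ∈ T, M ≤ s → ∀ t ∈ T, s ≤ t →
      |dist (γ t) (γ s) + dist (γ s) (γ 0) - t| < ε

/-- A Busemann point of the metric space `S`: an element of the Martin space `ℳ` which is
the limit of the net `(K_{·γ(t)})_{t ∈ T}` for some Rieffel almost-geodesic `γ`. -/
def IsBusemannPoint (b : S) (w : S → EReal) : Prop :=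
  w ∈ martin (metKer S) (metPi b) ∧
    ∃ (T : Set ℝ) (γ : ℝ → S), IsRieffelAlmostGeodesic T γ ∧
      Tendsto (fun t : T => fun i => K (metKer S) (metPi b) i (γ t)) atTop (𝓝 w)

/-! ### EReal helpers -/

lemma ereal_le_coe_of_forall {x : EReal} {r : ℝ}
    (h : ∀ ε : ℝ, 0 < ε → x ≤ ((r + ε : ℝ) : EReal)) : x ≤ (r : EReal) := by
  by_contra hc
  push_neg at hc
  obtain ⟨z, hz1, hz2⟩ := EReal.exists_between_coe_real hc
  have := h (z - r) (by exact_mod_cast sub_pos.2 (by exact_mod_cast hz1))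
  rw [add_sub_cancel] at this
  exact absurd (this.trans_lt hz2) (lt_irrefl _)

lemma ereal_coe_le_of_forall {x : EReal} {r : ℝ}
    (h : ∀ ε : ℝ, 0 < ε → ((r - ε : ℝ) : EReal) ≤ x) : (r : EReal) ≤ x := by
  by_contra hc
  push_neg at hc
  obtain ⟨z, hz1, hz2⟩ := EReal.exists_between_coe_real hc
  have := h (r - z) (by exact_mod_cast sub_pos.2 (by exact_mod_cast hz2))
  rw [sub_sub_cancel] at this
  exact absurd (hz1.trans_le this) (lt_irrefl _)

/-! ### Metric kernel identities -/

lemma pathWeight_metKer (p : ℕ → S) (n : ℕ) :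
    pathWeight (metKer S) p n
      = ((-(∑ k ∈ Finset.range n, dist (p k) (p (k + 1))) : ℝ) : EReal) := by
  induction n with
  | zero => simp [pathWeight]
  | succ n ih =>
      rw [pathWeight, Finset.sum_range_succ, Finset.sum_range_succ, ← pathWeight, ih]
      rw [metKer, ← EReal.coe_add]
      norm_num
      exact add_comm _ _

lemma star_metKer (i j : S) : star (metKer S) i j = ((-dist i j : ℝ) : EReal) := by
  apply le_antisymm
  · refine iSup_le fun n => iSup_le fun p => iSup_le fun hp => ?_
    rw [pathWeight_metKer, EReal.coe_le_coe_iff, neg_le_neg_iff]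
    have := dist_le_range_sum_dist p n
    rwa [hp.1, hp.2] at this
  · have h1 : pathWeight (metKer S) (fun m => if m = 0 then i else j) 1
        = ((-dist i j : ℝ) : EReal) := by
      simp [pathWeight, metKer]
    calc ((-dist i j : ℝ) : EReal)
        = pathWeight (metKer S) (fun m => if m = 0 then i else j) 1 := h1.symm
      _ ≤ star (metKer S) i j := by
          refine le_trans (le_of_eq rfl) ?_
          exact le_iSup_of_le 1 (le_iSup_of_le (fun m => if m = 0 then i else j)
            (le_iSup_of_le ⟨by simp, by simp⟩ le_rfl))

lemma plus_metKer (i j : S) : plus (metKer S) i j = ((-dist i j : ℝ) : EReal) := by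
  apply le_antisymm
  · refine iSup_le fun n => iSup_le fun _ => iSup_le fun p => iSup_le fun hp => ?_
    rw [pathWeight_metKer, EReal.coe_le_coe_iff, neg_le_neg_iff]
    have := dist_le_range_sum_dist p n
    rwa [hp.1, hp.2] at this
  · have h1 : pathWeight (metKer S) (fun m => if m = 0 then i else j) 1
        = ((-dist i j : ℝ) : EReal) := by
      simp [pathWeight, metKer]
    calc ((-dist i j : ℝ) : EReal)
        = pathWeight (metKer S) (fun m => if m = 0 then i else j) 1 := h1.symm
      _ ≤ plus (metKer S) i j := by
          exact le_iSup_of_le 1 (le_iSup_of_le le_rfl (le_iSup_of_le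
            (fun m => if m = 0 then i else j)
            (le_iSup_of_le ⟨by simp, by simp⟩ le_rfl)))

/-- real Martin kernel -/
def kR (b : S) (i j : S) : ℝ := dist b j - dist i j

lemma K_metKer (b i j : S) :
    K (metKer S) (metPi b) i j = ((kR b i j : ℝ) : EReal) := by
  rw [K, star_metKer, metPi, kR, ← EReal.coe_sub]
  norm_num
  rw [sub_eq_add_neg, add_comm]

lemma Kflat_metKer (b i j : S) :
    Kflat (metKer S) (metPi b) i j = ((kR b i j : ℝ) : EReal) := by
  rw [Kflat, plus_metKer, metPi, kR, ← EReal.coe_sub]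
  norm_num
  rw [sub_eq_add_neg, add_comm]

/-! ### Martin space basics -/

variable (b : S)

lemma continuous_kappa : Continuous (fun j => fun i => K (metKer S) (metPi b) i j) := by
  apply continuous_pi
  intro i
  simp only [K_metKer]
  exact continuous_coe_real_ereal.comp
    ((continuous_const.dist continuous_id).sub (continuous_const.dist continuous_id))

variable {b} {w : S → EReal}

lemma martin_coord_le (hw : w ∈ martin (metKer S) (metPi b)) (i : S) :
    w i ≤ ((dist b i : ℝ) : EReal) := by
  by_contra h
  push_neg at h
  have hU : {f : S → EReal | ((dist b i : ℝ) : EReal) < f i} ∈ 𝓝 w :=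
    (isOpen_lt continuous_const (continuous_apply i)).mem_nhds h
  obtain ⟨f, hfU, j, rfl⟩ := mem_closure_iff_nhds.1 hw _ hU
  have : ((dist b i : ℝ) : EReal) < ((kR b i j : ℝ) : EReal) := by
    simpa [K_metKer] using hfU
  rw [EReal.coe_lt_coe_iff] at this
  have htri : dist b j ≤ dist b i + dist i j := dist_triangle b i j
  rw [kR] at this
  linarith

lemma martin_coord_ge (hw : w ∈ martin (metKer S) (metPi b)) (i : S) :
    ((-dist b i : ℝ) : EReal) ≤ w i := by
  by_contra h
  push_neg at h
  have hU : {f : S → EReal | f i < ((-dist b i : ℝ) : EReal)} ∈ 𝓝 w :=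
    (isOpen_lt (continuous_apply i) continuous_const).mem_nhds h
  obtain ⟨f, hfU, j, rfl⟩ := mem_closure_iff_nhds.1 hw _ hU
  have : ((kR b i j : ℝ) : EReal) < ((-dist b i : ℝ) : EReal) := by
    simpa [K_metKer] using hfU
  rw [EReal.coe_lt_coe_iff] at this
  have htri : dist i j ≤ dist i b + dist b j := dist_triangle i b j
  rw [kR] at this
  rw [dist_comm i b] at htri
  linarith

/-- the real value of a coordinate of a point of the Martin space -/
def mval (w : S → EReal) (i : S) : ℝ := (w i).toReal

lemma martin_mval (hw : w ∈ martin (metKer S) (metPi b)) (i : S) :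
    w i = ((mval w i : ℝ) : EReal) := by
  have h1 := martin_coord_le hw i
  have h2 := martin_coord_ge hw i
  rw [mval, EReal.coe_toReal]
  · exact ne_top_of_le_ne_top (EReal.coe_ne_top _) h1
  · exact fun hb => absurd (hb ▸ h2) (by simp)

lemma martin_lip (hw : w ∈ martin (metKer S) (metPi b)) (i i' : S) :
    mval w i - mval w i' ≤ dist i i' := by
  by_contra h
  push_neg at h
  set c := dist i i' with hc
  set q := (mval w i + mval w i' + c) / 2 with hq
  have hq1 : mval w i' + c < q := by rw [hq]; linarith
  have hq2 : q < mval w i := by rw [hq]; linarith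
  have hU : ({f : S → EReal | ((q : ℝ) : EReal) < f i} ∩
      {f : S → EReal | f i' < ((q - c : ℝ) : EReal)}) ∈ 𝓝 w := by
    refine Filter.inter_mem ?_ ?_
    · refine (isOpen_lt continuous_const (continuous_apply i)).mem_nhds ?_
      show ((q : ℝ) : EReal) < w i
      rw [martin_mval hw i]
      exact_mod_cast hq2
    · refine (isOpen_lt (continuous_apply i') continuous_const).mem_nhds ?_
      show w i' < ((q - c : ℝ) : EReal)
      rw [martin_mval hw i']
      exact_mod_cast (by linarith : mval w i' < q - c)
  obtain ⟨f, hfU, j, rfl⟩ := mem_closure_iff_nhds.1 hw _ hU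
  have h1 : q < kR b i j := by
    have := hfU.1
    simp only [Set.mem_setOf_eq, K_metKer, EReal.coe_lt_coe_iff] at this
    exact this
  have h2 : kR b i' j < q - c := by
    have := hfU.2
    simp only [Set.mem_setOf_eq, K_metKer, EReal.coe_lt_coe_iff] at this
    exact this
  have habs : |dist i j - dist i' j| ≤ dist i i' := abs_dist_sub_le i i' j
  rw [abs_le] at habs
  rw [kR] at h1 h2
  have := habs.1
  linarith

lemma flat_eq (hw : w ∈ martin (metKer S) (metPi b)) :
    flat (metKer S) (metPi b) w = w := by
  funext i
  apply le_antisymm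
  · refine iSup₂_le fun W hW => ?_
    rw [martin_mval hw i]
    apply ereal_le_coe_of_forall
    intro ε hε
    have hW' : (W ∩ {f : S → EReal | f i < ((mval w i + ε : ℝ) : EReal)}) ∈ 𝓝 w := by
      refine Filter.inter_mem hW ?_
      refine (isOpen_lt (continuous_apply i) continuous_const).mem_nhds ?_
      show w i < ((mval w i + ε : ℝ) : EReal)
      rw [martin_mval hw i]
      exact_mod_cast (by linarith : mval w i < mval w i + ε)
    obtain ⟨f, hfU, j, rfl⟩ := mem_closure_iff_nhds.1 hw _ hW'
    refine iInf₂_le_of_le j hfU.1 ?_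
    rw [Kflat_metKer]
    have : ((kR b i j : ℝ) : EReal) < ((mval w i + ε : ℝ) : EReal) := by
      simpa [K_metKer] using hfU.2
    exact this.le
  · rw [martin_mval hw i]
    apply ereal_coe_le_of_forall
    intro ε hε
    refine le_iSup₂_of_le {f : S → EReal | ((mval w i - ε : ℝ) : EReal) < f i} ?_ ?_
    · refine (isOpen_lt continuous_const (continuous_apply i)).mem_nhds ?_
      show ((mval w i - ε : ℝ) : EReal) < w i
      rw [martin_mval hw i]
      exact_mod_cast (by linarith : mval w i - ε < mval w i)
    · refine le_iInf₂ fun j hj => ?_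
      rw [Kflat_metKer]
      have : ((mval w i - ε : ℝ) : EReal) < ((kR b i j : ℝ) : EReal) := by
        simpa [K_metKer] using hj
      exact this.le

lemma Hflat_self (hw : w ∈ martin (metKer S) (metPi b)) :
    Hflat (metKer S) (metPi b) w w = mu (metKer S) (metPi b) w w := by
  rw [Hflat, flat_eq hw]

lemma mu_self_le_zero (hw : w ∈ martin (metKer S) (metPi b)) :
    mu (metKer S) (metPi b) w w ≤ 0 := by
  refine iInf₂_le_of_le Set.univ Filter.univ_mem ?_
  refine iSup₂_le fun j _ => ?_
  have h1 : w j ≤ ((dist b j : ℝ) : EReal) := martin_coord_le hw j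
  calc ((metPi b j : ℝ) : EReal) + w j ≤ ((metPi b j : ℝ) : EReal) + ((dist b j : ℝ) : EReal) :=
        add_le_add le_rfl h1
    _ = (((metPi b j + dist b j : ℝ)) : EReal) := (EReal.coe_add _ _).symm
    _ = 0 := by rw [metPi]; norm_num

lemma mu_self_nonneg
    (h : ∀ W ∈ 𝓝 w, ∀ ε : ℝ, 0 < ε → ∃ j : S,
      (fun i => K (metKer S) (metPi b) i j) ∈ W ∧
        ((-ε : ℝ) : EReal) < ((metPi b j : ℝ) : EReal) + w j) :
    (0 : EReal) ≤ mu (metKer S) (metPi b) w w := by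
  refine le_iInf₂ fun W hW => ?_
  have h0 : ((0 : ℝ) : EReal) ≤ _ := ereal_coe_le_of_forall (x :=
      ⨆ (j : S) (_ : (fun i => K (metKer S) (metPi b) i j) ∈ W),
        ((metPi b j : ℝ) : EReal) + w j) ?_
  · simpa using h0
  · intro ε hε
    obtain ⟨j, hjW, hjv⟩ := h W hW ε hε
    have : ((0 - ε : ℝ) : EReal) < ((metPi b j : ℝ) : EReal) + w j := by
      rw [zero_sub]; exact_mod_cast hjv
    exact le_trans this.le (le_iSup₂_of_le j hjW le_rfl)

lemma exists_of_mu_self_eq_zero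
    (hmu : mu (metKer S) (metPi b) w w = 0) :
    ∀ W ∈ 𝓝 w, ∀ ε : ℝ, 0 < ε → ∃ j : S,
      (fun i => K (metKer S) (metPi b) i j) ∈ W ∧
        ((-ε : ℝ) : EReal) < ((metPi b j : ℝ) : EReal) + w j := by
  intro W hW ε hε
  have hsup : (0 : EReal) ≤ ⨆ (j : S) (_ : (fun i => K (metKer S) (metPi b) i j) ∈ W),
      ((metPi b j : ℝ) : EReal) + w j := hmu ▸ iInf₂_le W hW
  have hlt : ((-ε : ℝ) : EReal) < ⨆ (j : S) (_ : (fun i => K (metKer S) (metPi b) i j) ∈ W),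
      ((metPi b j : ℝ) : EReal) + w j := by
    refine lt_of_lt_of_le ?_ hsup
    exact_mod_cast (by linarith : (-ε : ℝ) < 0)
  obtain ⟨j, hj⟩ := lt_iSup_iff.1 hlt
  obtain ⟨hjW, hjv⟩ := lt_iSup_iff.1 hj
  exact ⟨j, hjW, hjv⟩



/-! ### 𝒦 is contained in the minimal Martin space -/

lemma kappa_mem_martinMin (b j₀ : S) :
    (fun i => K (metKer S) (metPi b) i j₀) ∈ martinMin (metKer S) (metPi b) := by
  have hmem : (fun i => K (metKer S) (metPi b) i j₀) ∈ martin (metKer S) (metPi b) :=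
    subset_closure (Set.mem_range_self j₀)
  refine ⟨hmem, ?_⟩
  rw [Hflat_self hmem]
  refine le_antisymm (mu_self_le_zero hmem) (mu_self_nonneg ?_)
  intro W hW ε hε
  refine ⟨j₀, mem_of_mem_nhds hW, ?_⟩
  have heq : ((metPi b j₀ : ℝ) : EReal) + (fun i => K (metKer S) (metPi b) i j₀) j₀
      = ((metPi b j₀ + kR b j₀ j₀ : ℝ) : EReal) := by
    show ((metPi b j₀ : ℝ) : EReal) + K (metKer S) (metPi b) j₀ j₀ = _
    rw [K_metKer]
    exact (EReal.coe_add _ _).symm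
  rw [heq, EReal.coe_lt_coe_iff]
  simp only [metPi, kR, dist_self, sub_zero, neg_add_cancel]
  linarith

/-! ### boundedness forces membership in 𝒦 -/

lemma mem_kerCols_of_bounded [ProperSpace S] {b : S} {w : S → EReal}
    (h : ∃ R : ℝ, ∀ W ∈ 𝓝 w, ∃ j : S,
      (fun i => K (metKer S) (metPi b) i j) ∈ W ∧ dist b j ≤ R) :
    w ∈ kerCols (metKer S) (metPi b) := by
  obtain ⟨R, hR⟩ := h
  have hcomp : IsCompact ((fun j => fun i => K (metKer S) (metPi b) i j) ''
      Metric.closedBall b R) :=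
    (isCompact_closedBall b R).image (continuous_kappa b)
  have hcl : w ∈ closure ((fun j => fun i => K (metKer S) (metPi b) i j) ''
      Metric.closedBall b R) := by
    rw [mem_closure_iff_nhds]
    intro U hU
    obtain ⟨j, hjW, hjR⟩ := hR U hU
    exact ⟨_, hjW, Set.mem_image_of_mem _ (Metric.mem_closedBall.2 (by rwa [dist_comm]))⟩
  rw [hcomp.isClosed.closure_eq] at hcl
  obtain ⟨j, _, rfl⟩ := hcl
  exact ⟨j, rfl⟩

lemma sel_lemma [ProperSpace S] {b : S} {w : S → EReal}
    (hw : w ∈ martinMin (metKer S) (metPi b))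
    (hnk : w ∉ kerCols (metKer S) (metPi b)) :
    ∀ W ∈ 𝓝 w, ∀ ε : ℝ, 0 < ε → ∀ R : ℝ, ∃ j : S,
      (fun i => K (metKer S) (metPi b) i j) ∈ W ∧
        dist b j - ε < mval w j ∧ R < dist b j := by
  obtain ⟨hmem, hH⟩ := hw
  rw [Hflat_self hmem] at hH
  intro W hW ε hε R
  have hfar : ∃ W₀ ∈ 𝓝 w, ∀ j : S, (fun i => K (metKer S) (metPi b) i j) ∈ W₀ →
      R < dist b j := by
    by_contra hcon
    push_neg at hcon
    refine hnk (mem_kerCols_of_bounded ⟨R, fun W' hW' => ?_⟩)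
    obtain ⟨j, hj1, hj2⟩ := hcon W' hW'
    exact ⟨j, hj1, hj2⟩
  obtain ⟨W₀, hW₀, hfar⟩ := hfar
  obtain ⟨j, hjW, hjv⟩ := exists_of_mu_self_eq_zero hH (W ∩ W₀)
    (Filter.inter_mem hW hW₀) ε hε
  refine ⟨j, hjW.1, ?_, hfar j hjW.2⟩
  rw [martin_mval hmem j, ← EReal.coe_add, EReal.coe_lt_coe_iff, metPi] at hjv
  linarith

/-! ### Busemann points: key estimate -/

lemma busemann_key {b : S} {w : S → EReal} {T : Set ℝ} {γ : ℝ → S}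
    (hmem : w ∈ martin (metKer S) (metPi b))
    (hT0 : (0:ℝ) ∈ T) (hunb : ¬ BddAbove T)
    (hRie : ∀ ε : ℝ, 0 < ε → ∃ M : ℝ, ∀ s ∈ T, M ≤ s → ∀ t ∈ T, s ≤ t →
      |dist (γ t) (γ s) + dist (γ s) (γ 0) - t| < ε)
    (hconv : Tendsto (fun t : T => fun i => K (metKer S) (metPi b) i (γ t)) atTop (𝓝 w))
    (ε : ℝ) (hε : 0 < ε) (W : Set (S → EReal)) (hW : W ∈ 𝓝 w) (N : ℝ) :
    ∃ s : ℝ, s ∈ T ∧ N ≤ s ∧ (fun i => K (metKer S) (metPi b) i (γ s)) ∈ W ∧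
      mval w (γ 0) + dist (γ 0) (γ s) - 3*ε ≤ mval w (γ s) ∧
      dist b (γ s) - dist (γ 0) (γ s) < mval w (γ 0) + ε ∧
      s - ε ≤ dist (γ 0) (γ s) := by
  haveI : Nonempty T := ⟨⟨0, hT0⟩⟩
  have hco : ∀ i : S, Tendsto (fun τ : T => kR b i (γ τ)) atTop (𝓝 (mval w i)) := by
    intro i
    have h1 := tendsto_pi_nhds.1 hconv i
    rw [martin_mval hmem i] at h1
    rw [← EReal.tendsto_coe]
    have heq : (fun τ : T => ((kR b i (γ τ) : ℝ) : EReal))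
        = fun τ : T => K (metKer S) (metPi b) i (γ τ) := by
      funext τ; rw [K_metKer]
    rw [heq]
    exact h1
  have hev_ge : ∀ M' : ℝ, ∀ᶠ τ : T in atTop, M' ≤ (τ : ℝ) := by
    intro M'
    rw [not_bddAbove_iff] at hunb
    obtain ⟨x, hxT, hx⟩ := hunb M'
    filter_upwards [eventually_ge_atTop (⟨x, hxT⟩ : T)] with τ hτ
    exact le_trans hx.le (Subtype.coe_le_coe.2 hτ)
  obtain ⟨M, hM⟩ := hRie ε hε
  have hE1 : ∀ᶠ τ : T in atTop, (fun i => K (metKer S) (metPi b) i (γ τ)) ∈ W :=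
    mem_map.1 (hconv hW)
  have hE4 : ∀ᶠ τ : T in atTop, kR b (γ 0) (γ τ) < mval w (γ 0) + ε :=
    (hco (γ 0)).eventually_lt_const (lt_add_of_pos_right _ hε)
  obtain ⟨τ, hτW, hτM, hτN, hτ4⟩ := (hE1.and ((hev_ge M).and ((hev_ge N).and hE4))).exists
  refine ⟨(τ : ℝ), τ.2, hτN, hτW, ?_, by rw [kR] at hτ4; linarith, ?_⟩
  · -- main limit bound
    refine ge_of_tendsto (hco (γ (τ : ℝ))) ?_
    have hE5 : ∀ᶠ τ' : T in atTop, mval w (γ 0) - ε < kR b (γ 0) (γ τ') :=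
      (hco (γ 0)).eventually_const_lt (by linarith)
    filter_upwards [eventually_ge_atTop τ, hev_ge M, hE5] with τ' hge hM' h5
    have hle : (τ : ℝ) ≤ (τ' : ℝ) := Subtype.coe_le_coe.2 hge
    have hst := hM (τ : ℝ) τ.2 hτM (τ' : ℝ) τ'.2 hle
    have htt := hM (τ' : ℝ) τ'.2 hM' (τ' : ℝ) τ'.2 le_rfl
    rw [dist_self, zero_add] at htt
    rw [abs_lt] at hst htt
    have e1 : dist (γ (τ' : ℝ)) (γ (τ : ℝ)) = dist (γ (τ : ℝ)) (γ (τ' : ℝ)) := dist_comm _ _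
    have e2 : dist (γ (τ : ℝ)) (γ 0) = dist (γ 0) (γ (τ : ℝ)) := dist_comm _ _
    have e3 : dist (γ (τ' : ℝ)) (γ 0) = dist (γ 0) (γ (τ' : ℝ)) := dist_comm _ _
    rw [kR] at h5 ⊢
    rw [e1, e2] at hst
    rw [e3] at htt
    have := hst.2
    have := htt.1
    linarith [hst.1, htt.2]
  · have hss := hM (τ : ℝ) τ.2 hτM (τ : ℝ) τ.2 le_rfl
    rw [dist_self, zero_add, abs_lt] at hss
    rw [dist_comm]
    linarith [hss.1]

lemma busemann_mem_martinMin {b : S} {w : S → EReal} (h : IsBusemannPoint b w) :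
    w ∈ martinMin (metKer S) (metPi b) := by
  obtain ⟨hmem, T, γ, ⟨hT0, _, hunb, hRie⟩, hconv⟩ := h
  refine ⟨hmem, ?_⟩
  rw [Hflat_self hmem]
  refine le_antisymm (mu_self_le_zero hmem) (mu_self_nonneg ?_)
  intro W hW ε hε
  obtain ⟨s, hsT, _, hsW, h4, h5, _⟩ :=
    busemann_key hmem hT0 hunb hRie hconv (ε/5) (by linarith) W hW 0
  refine ⟨γ s, hsW, ?_⟩
  have heq : ((metPi b (γ s) : ℝ) : EReal) + w (γ s)
      = ((metPi b (γ s) + mval w (γ s) : ℝ) : EReal) := by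
    rw [martin_mval hmem (γ s)]
    exact (EReal.coe_add _ _).symm
  rw [heq, EReal.coe_lt_coe_iff, metPi]
  linarith

lemma busemann_not_ker {b : S} {w : S → EReal} (h : IsBusemannPoint b w) :
    w ∉ kerCols (metKer S) (metPi b) := by
  rintro ⟨j₀, hj⟩
  obtain ⟨hmem, T, γ, ⟨hT0, _, hunb, hRie⟩, hconv⟩ := h
  have hval : ∀ i : S, mval w i ≤ dist b j₀ := by
    intro i
    have : w i = ((kR b i j₀ : ℝ) : EReal) := by
      rw [← K_metKer]
      exact congrFun hj.symm i ▸ rfl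
    rw [mval, this, EReal.toReal_coe, kR]
    have := dist_nonneg (x := i) (y := j₀)
    linarith
  obtain ⟨s, hsT, hsN, _, h4, _, h6⟩ :=
    busemann_key hmem hT0 hunb hRie hconv 1 one_pos Set.univ Filter.univ_mem
      (dist b j₀ - mval w (γ 0) + 5)
  have hv1 := hval (γ s)
  have hv2 := hval (γ 0)
  linarith



/-! ### construction of an almost geodesic -/

noncomputable def iterSeq (b : S) (pick : ℕ → (ℕ → S) → S) : ℕ → ℕ → S
  | 0 => fun _ => b
  | (k+1) => fun m => if m ≤ k then iterSeq b pick k m else pick k (iterSeq b pick k)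

lemma martinMin_to_busemann [ProperSpace S] {b : S} {w : S → EReal}
    (hw : w ∈ martinMin (metKer S) (metPi b))
    (hnk : w ∉ kerCols (metKer S) (metPi b)) :
    IsBusemannPoint b w := by
  classical
  have hmem := hw.1
  haveI : Nonempty S := ⟨b⟩
  set e : ℕ → S := TopologicalSpace.denseSeq S with he_def
  have he : DenseRange e := TopologicalSpace.denseRange_denseSeq S
  set δ : ℕ → ℝ := fun n => ((n : ℝ) + 1)⁻¹ with hδ_def
  have hδpos : ∀ n, 0 < δ n := fun n => by positivity
  have hδanti : ∀ {m n : ℕ}, m ≤ n → δ n ≤ δ m := by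
    intro m n h
    have h1 : (0:ℝ) < (m:ℝ) + 1 := by positivity
    have h2 : (m:ℝ) + 1 ≤ (n:ℝ) + 1 := by exact_mod_cast Nat.succ_le_succ h
    exact inv_anti₀ h1 h2
  have hδto : ∀ ε : ℝ, 0 < ε → ∃ n₀ : ℕ, ∀ n, n₀ ≤ n → δ n < ε := by
    intro ε hε
    obtain ⟨n₀, hn₀⟩ := exists_nat_gt ε⁻¹
    refine ⟨n₀, fun n hn => lt_of_le_of_lt (hδanti hn) ?_⟩
    have h1 : ε⁻¹ < (n₀ : ℝ) + 1 := lt_trans hn₀ (by linarith)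
    exact inv_lt_of_inv_lt₀ hε h1
  -- the one-step selection
  have P : ∀ (k : ℕ) (f : ℕ → S), ∃ j : S,
      (∀ m, m ≤ k → |kR b (e m) j - mval w (e m)| < δ (k+1) ∧
                    |kR b (f m) j - mval w (f m)| < δ (k+1)) ∧
      dist b j - δ (k+1) < mval w j ∧
      max (dist b (f k)) ((k : ℝ) + 1) < dist b j := by
    intro k f
    set d := δ (k+1) with hd_def
    have hd : 0 < d := hδpos (k+1)
    set V : ℕ → Set (S → EReal) := fun m =>
      ({g | ((mval w (e m) - d : ℝ) : EReal) < g (e m)} ∩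
       {g | g (e m) < ((mval w (e m) + d : ℝ) : EReal)}) ∩
      ({g | ((mval w (f m) - d : ℝ) : EReal) < g (f m)} ∩
       {g | g (f m) < ((mval w (f m) + d : ℝ) : EReal)}) with hV_def
    have hVnhds : ∀ m, V m ∈ 𝓝 w := by
      intro m
      have hlt : ∀ i : S, ((mval w i - d : ℝ) : EReal) < w i := by
        intro i
        rw [martin_mval hmem i, EReal.coe_lt_coe_iff]
        linarith
      have hgt : ∀ i : S, w i < ((mval w i + d : ℝ) : EReal) := by
        intro i
        rw [martin_mval hmem i, EReal.coe_lt_coe_iff]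
        linarith
      refine Filter.inter_mem (Filter.inter_mem ?_ ?_) (Filter.inter_mem ?_ ?_)
      · exact (isOpen_lt continuous_const (continuous_apply _)).mem_nhds (hlt _)
      · exact (isOpen_lt (continuous_apply _) continuous_const).mem_nhds (hgt _)
      · exact (isOpen_lt continuous_const (continuous_apply _)).mem_nhds (hlt _)
      · exact (isOpen_lt (continuous_apply _) continuous_const).mem_nhds (hgt _)
    have hWnhds : (⋂ m ∈ Finset.range (k+1), V m) ∈ 𝓝 w :=
      (Filter.biInter_finset_mem _).2 fun m _ => hVnhds m
    obtain ⟨j, hjW, hjv, hjf⟩ := sel_lemma hw hnk _ hWnhds d hd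
      (max (dist b (f k)) ((k : ℝ) + 1))
    refine ⟨j, ?_, hjv, hjf⟩
    intro m hm
    have hjm := Set.mem_iInter₂.1 hjW m (Finset.mem_range.2 (Nat.lt_succ_of_le hm))
    rw [hV_def] at hjm
    obtain ⟨⟨h1, h2⟩, h3, h4⟩ := hjm
    simp only [Set.mem_setOf_eq, K_metKer, EReal.coe_lt_coe_iff] at h1 h2 h3 h4
    constructor
    · rw [abs_lt]; constructor <;> linarith
    · rw [abs_lt]; constructor <;> linarith
  choose pick hpick using P
  set x : ℕ → S := fun k => iterSeq b pick k k with hx_def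
  have hx0 : x 0 = b := rfl
  have hcoh : ∀ k m, m ≤ k → iterSeq b pick k m = x m := by
    intro k
    induction k with
    | zero => intro m hm; rw [Nat.le_zero] at hm; subst hm; rfl
    | succ k ih =>
        intro m hm
        by_cases h : m ≤ k
        · show (if m ≤ k then iterSeq b pick k m else _) = x m
          rw [if_pos h, ih m h]
        · have : m = k + 1 := by omega
          subst this
          rfl
  have hstep : ∀ k, x (k+1) = pick k (iterSeq b pick k) := by
    intro k
    show (if k + 1 ≤ k then _ else pick k (iterSeq b pick k)) = _
    rw [if_neg (by omega)]
  have hQ : ∀ k, (∀ m, m ≤ k → |kR b (e m) (x (k+1)) - mval w (e m)| < δ (k+1) ∧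
                    |kR b (x m) (x (k+1)) - mval w (x m)| < δ (k+1)) ∧
      dist b (x (k+1)) - δ (k+1) < mval w (x (k+1)) ∧
      max (dist b (x k)) ((k : ℝ) + 1) < dist b (x (k+1)) := by
    intro k
    have h := hpick k (iterSeq b pick k)
    rw [← hstep k] at h
    refine ⟨fun m hm => ?_, h.2.1, h.2.2⟩
    have := h.1 m hm
    rwa [hcoh k m hm] at this
  set t : ℕ → ℝ := fun k => dist b (x k) with ht_def
  have ht0 : t 0 = 0 := dist_self b
  have htmono : StrictMono t :=
    strictMono_nat_of_lt_succ fun k => lt_of_le_of_lt (le_max_left _ _) (hQ k).2.2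
  have htk : ∀ k : ℕ, (k : ℝ) ≤ t k := by
    intro k
    cases k with
    | zero => simp [ht0]
    | succ k =>
        have := lt_of_le_of_lt (le_max_right (dist b (x k)) _) (hQ k).2.2
        push_cast
        linarith
  have hrx : ∀ k, t (k+1) - δ (k+1) < mval w (x (k+1)) := fun k => (hQ k).2.1
  have hest0 : ∀ k l : ℕ, t l ≤ dist (x k) (x l) + t k := by
    intro k l
    have := dist_triangle b (x k) (x l)
    rw [dist_comm (x k) (x l)] at this
    simpa [ht_def] using by linarith [dist_triangle b (x k) (x l)]
  have hest : ∀ k l, 1 ≤ k → k ≤ l → dist (x k) (x l) + t k ≤ t l + 2 * δ k := by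
    intro k l hk1 hkl
    rcases eq_or_lt_of_le hkl with rfl | hlt
    · rw [dist_self]
      have := hδpos k
      linarith
    · obtain ⟨l', rfl⟩ : ∃ l', l = l' + 1 := ⟨l - 1, by omega⟩
      have hkl' : k ≤ l' := by omega
      have h1 := ((hQ l').1 k hkl').2
      rw [abs_lt] at h1
      have h2 : kR b (x k) (x (l'+1)) = t (l'+1) - dist (x k) (x (l'+1)) := by
        rw [kR]
      obtain ⟨k', rfl⟩ : ∃ k', k = k' + 1 := ⟨k - 1, by omega⟩
      have h3 := hrx k'
      have h4 : δ (l'+1) ≤ δ (k'+1) := hδanti (by omega)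
      rw [h2] at h1
      linarith [h1.1]
  set T : Set ℝ := Set.range t with hT_def
  haveI : Nonempty T := ⟨⟨t 0, 0, rfl⟩⟩
  have htinj : Function.Injective t := htmono.injective
  set γ : ℝ → S := fun s => if h : ∃ k, t k = s then x h.choose else b with hγ_def
  have hγ : ∀ k, γ (t k) = x k := by
    intro k
    have h : ∃ k', t k' = t k := ⟨k, rfl⟩
    rw [hγ_def]
    simp only [dif_pos h]
    rw [htinj h.choose_spec]
  have hγ0 : γ 0 = b := by rw [← ht0, hγ, hx0]
  have hidx : ∀ {k l : ℕ}, t k ≤ t l → k ≤ l := by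
    intro k l h
    by_contra hc
    push_neg at hc
    exact absurd (htmono hc) (not_lt.2 h)
  have hR : IsRieffelAlmostGeodesic T γ := by
    refine ⟨⟨0, ht0⟩, ?_, ?_, ?_⟩
    · rintro s ⟨k, rfl⟩; exact dist_nonneg
    · rintro ⟨B, hB⟩
      obtain ⟨n, hn⟩ := exists_nat_gt B
      have h1 : t n ≤ B := hB ⟨n, rfl⟩
      have := htk n
      linarith
    · intro ε hε
      obtain ⟨n₀, hn₀⟩ := hδto (ε/2) (by linarith)
      set k₀ := n₀ + 1 with hk₀
      refine ⟨t k₀, ?_⟩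
      rintro s ⟨k, rfl⟩ hMk τ ⟨l, rfl⟩ hkl
      have hk₀k : k₀ ≤ k := hidx hMk
      have hkl' : k ≤ l := hidx hkl
      have hk1 : 1 ≤ k := by omega
      rw [hγ, hγ, hγ0]
      have h1 := hest k l hk1 hkl'
      have h2 := hest0 k l
      have h3 : δ k ≤ δ k₀ := hδanti hk₀k
      have h4 : δ k₀ < ε / 2 := hn₀ k₀ (by omega)
      rw [dist_comm (x k) b]
      rw [dist_comm (x l) (x k)]
      rw [abs_lt]
      constructor
      · have : t k = dist b (x k) := rfl
        linarith
      · linarith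
  have hconv_e : ∀ m, Tendsto (fun n => kR b (e m) (x n)) atTop (𝓝 (mval w (e m))) := by
    intro m
    rw [Metric.tendsto_atTop]
    intro ε hε
    obtain ⟨n₀, hn₀⟩ := hδto ε hε
    refine ⟨max (m+1) n₀, fun n hn => ?_⟩
    obtain ⟨n', rfl⟩ : ∃ n', n = n' + 1 := ⟨n - 1, by omega⟩
    have hm' : m ≤ n' := by omega
    have := ((hQ n').1 m hm').1
    rw [Real.dist_eq]
    exact lt_trans this (hn₀ (n'+1) (by omega))
  have hconv_all : ∀ i, Tendsto (fun n => kR b i (x n)) atTop (𝓝 (mval w i)) := by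
    intro i
    rw [Metric.tendsto_atTop]
    intro ε hε
    obtain ⟨m, hm⟩ := he.exists_dist_lt i (by linarith : (0:ℝ) < ε/3)
    obtain ⟨N, hN⟩ := Metric.tendsto_atTop.1 (hconv_e m) (ε/3) (by linarith)
    refine ⟨N, fun n hn => ?_⟩
    have ha := hN n hn
    rw [Real.dist_eq] at ha ⊢
    have hb : |kR b i (x n) - kR b (e m) (x n)| ≤ dist i (e m) := by
      have habs := abs_dist_sub_le (e m) i (x n)
      rw [kR, kR]
      rw [abs_le] at habs ⊢
      rw [dist_comm i (e m)]
      constructor <;> [linarith [habs.1]; linarith [habs.2]]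
    have hcu : |mval w i - mval w (e m)| ≤ dist i (e m) := by
      rw [abs_le]
      constructor
      · have := martin_lip hmem (e m) i
        rw [dist_comm (e m) i] at this
        linarith
      · exact martin_lip hmem i (e m)
    rw [abs_lt] at ha
    rw [abs_le] at hb hcu
    have hm2 : dist i (e m) < ε/3 := hm
    rw [abs_lt]
    constructor <;> linarith [hb.1, hb.2, hcu.1, hcu.2, ha.1, ha.2, hm2]
  have hTop : Tendsto (fun τ : T => fun i => K (metKer S) (metPi b) i (γ τ)) atTop (𝓝 w) := by
    rw [tendsto_pi_nhds]
    intro i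
    have heq : (fun τ : T => K (metKer S) (metPi b) i (γ τ))
        = fun τ : T => ((kR b i (γ τ) : ℝ) : EReal) := funext fun τ => K_metKer b i (γ τ)
    rw [heq, martin_mval hmem i, EReal.tendsto_coe]
    rw [Metric.tendsto_atTop]
    intro ε hε
    obtain ⟨N, hN⟩ := Metric.tendsto_atTop.1 (hconv_all i) ε hε
    refine ⟨⟨t N, N, rfl⟩, fun τ hτ => ?_⟩
    obtain ⟨l, hl⟩ := τ.2
    have hNl : N ≤ l := hidx (by rw [hl]; exact_mod_cast Subtype.coe_le_coe.2 hτ)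
    have hγτ : γ (τ : ℝ) = x l := by rw [← hl, hγ]
    rw [hγτ]
    exact hN l hNl
  exact ⟨hmem, T, γ, hR, hTop⟩


/-- for a proper metric space `(S,d)`, the minimal Martin space is the
disjoint union of `𝒦` and the set of Busemann points. -/
theorem martinMin_eq_kerCols_union_busemann (S : Type*) [MetricSpace S]
    [ProperSpace S] (b : S) :
    martinMin (metKer S) (metPi b) =
      kerCols (metKer S) (metPi b) ∪ {w | IsBusemannPoint b w} ∧
    ∀ w : S → EReal, IsBusemannPoint b w → w ∉ kerCols (metKer S) (metPi b) := by
  constructor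
  · apply Set.eq_of_subset_of_subset
    · intro w hw
      by_cases hk : w ∈ kerCols (metKer S) (metPi b)
      · exact Or.inl hk
      · exact Or.inr (martinMin_to_busemann hw hk)
    · rintro w (⟨j₀, rfl⟩ | hb)
      · exact kappa_mem_martinMin b j₀
      · exact busemann_mem_martinMin hb
  · exact fun w h => busemann_not_ker h

end MaxPlus
end
end
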